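/- Let G be an r-graph with r ≥ 1 and s ≥ 1, let {α_S} be a dependence sequence for G, and let x be a vertex of G such that α_S = 0 for every s-subset S not containing x. Then the sequence β_{S'} := α_{{x} ∪ S'}, indexed by (s−1)-subsets S' of V(G)\{x}, is a dependence sequence for the link hypergraph G/x. -/
import Mathlib


/-- `α` is a dependence sequence (with parameter `s`) for the hypergraph on `Fin n`
with edge set `E`. -/
def IsDependenceSeq (n s : ℕ) (E : Finset (Finset (Fin n))) (α : Finset (Fin n) → ℝ) : Prop :=
  ∀ e ∈ E, ∑ S ∈ e.powersetCard s, α S = 0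

/-- If `α S = 0` for every `s`-set not containing `x`, then
`β S' := α (insert x S')` is a dependence sequence for the link `G/x`. -/
theorem stmt3 (n r s : ℕ) (hr : 1 ≤ r) (hs : 1 ≤ s) (E : Finset (Finset (Fin n)))
    (hE : ∀ e ∈ E, e.card = r) (α : Finset (Fin n) → ℝ)
    (hα : IsDependenceSeq n s E α) (x : Fin n)
    (hx : ∀ S : Finset (Fin n), S.card = s → x ∉ S → α S = 0) :
    IsDependenceSeq n (s - 1) ((E.filter (fun e => x ∈ e)).image (fun e => e.erase x))
      (fun S' => α (insert x S')) := by
  intro e' he'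
  simp only [Finset.mem_image, Finset.mem_filter] at he'
  obtain ⟨e, ⟨heE, hxe⟩, rfl⟩ := he'
  have h0 := hα e heE
  rw [← Finset.sum_filter_add_sum_filter_not (e.powersetCard s) (fun S => x ∈ S)] at h0
  have h2 : ∑ S ∈ (e.powersetCard s).filter (fun S => ¬ x ∈ S), α S = 0 := by
    apply Finset.sum_eq_zero
    intro S hS
    simp only [Finset.mem_filter, Finset.mem_powersetCard] at hS
    exact hx S hS.1.2 hS.2
  rw [h2, add_zero] at h0
  rw [← h0]
  refine Finset.sum_nbij' (fun S' => insert x S') (fun S => S.erase x) ?_ ?_ ?_ ?_ ?_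
  · intro S' hS'
    simp only [Finset.mem_powersetCard] at hS'
    have hxS' : x ∉ S' := fun h => (Finset.mem_erase.mp (hS'.1 h)).1 rfl
    simp only [Finset.mem_filter, Finset.mem_powersetCard]
    refine ⟨⟨Finset.insert_subset hxe (hS'.1.trans (Finset.erase_subset _ _)), ?_⟩,
      Finset.mem_insert_self _ _⟩
    rw [Finset.card_insert_of_notMem hxS', hS'.2]
    omega
  · intro S hS
    simp only [Finset.mem_filter, Finset.mem_powersetCard] at hS
    simp only [Finset.mem_powersetCard]
    exact ⟨Finset.erase_subset_erase _ hS.1.1,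
      by rw [Finset.card_erase_of_mem hS.2, hS.1.2]⟩
  · intro S' hS'
    simp only [Finset.mem_powersetCard] at hS'
    have hxS' : x ∉ S' := fun h => (Finset.mem_erase.mp (hS'.1 h)).1 rfl
    simp [Finset.erase_insert hxS']
  · intro S hS
    simp only [Finset.mem_filter] at hS
    simp [Finset.insert_erase hS.2]
  · intro S' hS'
    rfl
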